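/- Let (G,N,M) be a Camina triple in a finite group G, and let H ≤ G be a subgroup with G = HN and H ∩ M = 1. Then (G,N,M) is a Frobenius triple if and only if (HM, (H ∩ N)M, M) is a Frobenius triple. -/

import Mathlib

/-- `(G, N, M)` is a Frobenius triple: `M` and `N` are nontrivial proper normal
subgroups of `G` with `M ≤ N`, and `C_G(x) ≤ N` for every nonidentity `x ∈ M`. -/
def IsFrobeniusTriple {G : Type*} [Group G] (N M : Subgroup G) : Prop :=
  N.Normal ∧ M.Normal ∧ N ≠ ⊥ ∧ N ≠ ⊤ ∧ M ≠ ⊥ ∧ M ≠ ⊤ ∧ M ≤ N ∧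
    ∀ x ∈ M, x ≠ 1 → Subgroup.centralizer {x} ≤ N

/-- `(G, N, M)` is a Camina triple: `M` and `N` are nontrivial proper normal
subgroups of `G` with `M ≤ N`, and every `g ∈ G \ N` is conjugate to `g * m`
for every `m ∈ M`. -/
def IsCaminaTriple {G : Type*} [Group G] (N M : Subgroup G) : Prop :=
  N.Normal ∧ M.Normal ∧ N ≠ ⊥ ∧ N ≠ ⊤ ∧ M ≠ ⊥ ∧ M ≠ ⊤ ∧ M ≤ N ∧
    ∀ g : G, g ∉ N → ∀ m ∈ M, IsConj g (g * m)

open Subgroup Pointwise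

/-- Strip off primes other than `p` from an element whose image in `Γ ⧸ Q` has order `p`,
obtaining an element of `p`-power order outside `Q`. -/
lemma exists_primePow_order_not_mem {Γ : Type*} [Group Γ] [Finite Γ] (Q : Subgroup Γ)
    [Q.Normal] (p : ℕ) (hp : p.Prime) (k : Γ) (hk : orderOf ((k : Γ ⧸ Q)) = p) :
    ∃ w : Γ, w ∉ Q ∧ ∃ a : ℕ, orderOf w = p ^ a := by
  obtain ⟨n, hn⟩ : ∃ n, orderOf k = n := ⟨_, rfl⟩
  induction n using Nat.strong_induction_on generalizing k with
  | _ n ih =>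
  subst hn
  by_cases hpp : ∃ a, orderOf k = p ^ a
  · refine ⟨k, fun hkQ => ?_, hpp⟩
    have h1 : ((k : Γ ⧸ Q)) = 1 := (QuotientGroup.eq_one_iff k).2 hkQ
    rw [h1, orderOf_one] at hk
    exact hp.one_lt.ne' hk.symm
  · set t := orderOf k with ht
    have ht0 : t ≠ 0 := (orderOf_pos k).ne'
    -- find a prime q ≠ p dividing t
    have hm1 : ordCompl[p] t ≠ 1 := by
      intro h1
      exact hpp ⟨t.factorization p, by
        have := Nat.ordProj_mul_ordCompl_eq_self t p
        rw [h1, mul_one] at this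
        exact this.symm⟩
    obtain ⟨q, hq, hqm⟩ := Nat.exists_prime_and_dvd hm1
    have hqt : q ∣ t := hqm.trans (Nat.ordCompl_dvd t p)
    have hqp : q ≠ p := by
      rintro rfl
      exact Nat.not_dvd_ordCompl hq ht0 hqm
    set v := t.factorization q with hv
    have hqv_dvd : q ^ v ∣ t := Nat.ordProj_dvd t q
    have hqv1 : 1 < q ^ v := by
      have hv1 : 0 < v := (Nat.Prime.factorization_pos_of_dvd hq ht0 hqt)
      calc 1 < q := hq.one_lt
      _ ≤ q ^ v := Nat.le_self_pow (Nat.pos_iff_ne_zero.1 hv1) q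
    have hord : orderOf (k ^ (q ^ v)) = t / q ^ v := by
      rw [orderOf_pow, Nat.gcd_eq_right hqv_dvd]
    have hlt : orderOf (k ^ (q ^ v)) < t := by
      rw [hord]
      exact Nat.div_lt_self (Nat.pos_of_ne_zero ht0) hqv1
    have hmk : ((k ^ (q ^ v) : Γ) : Γ ⧸ Q) = ((k : Γ ⧸ Q)) ^ (q ^ v) := rfl
    have hco : Nat.Coprime p (q ^ v) :=
      (Nat.Coprime.pow_right v ((Nat.coprime_primes hp hq).2 (Ne.symm hqp)))
    have hord2 : orderOf (((k ^ (q ^ v) : Γ) : Γ ⧸ Q)) = p := by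
      rw [hmk, orderOf_pow, hk, hco.gcd_eq_one, Nat.div_one]
    exact ih _ hlt _ hord2 rfl

/-- Key step: in a Camina triple whose index data is coprime to `|M|`,
an element outside `N` commuting with `x ∈ M` forces `x = 1`. -/
lemma camina_commute_eq_one {G : Type*} [Group G] [Finite G] {N M : Subgroup G} [N.Normal]
    (hcam : ∀ g : G, g ∉ N → ∀ m ∈ M, IsConj g (g * m))
    (hcop : ∀ p : ℕ, p.Prime → p ∣ Nat.card M → ¬ p ∣ Nat.card (G ⧸ N))
    (g : G) (hg : g ∉ N) (x : G) (hx : x ∈ M) (hcomm : Commute g x) : x = 1 := by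
  obtain ⟨n, hn⟩ : ∃ n, orderOf g = n := ⟨_, rfl⟩
  induction n using Nat.strong_induction_on generalizing g with
  | _ n ih =>
  subst hn
  by_cases hco : (Nat.gcd (orderOf g) (Nat.card M)) = 1
  · -- coprime case : use the Camina condition
    have hxo : orderOf x ∣ Nat.card M := by
      have := orderOf_dvd_natCard (⟨x, hx⟩ : M)
      rwa [Subgroup.orderOf_mk] at this
    have hco2 : (orderOf g).Coprime (orderOf x) :=
      Nat.Coprime.coprime_dvd_right hxo hco
    obtain ⟨c, hc⟩ := isConj_iff.mp (hcam g hg x hx)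
    have hsemi : SemiconjBy c g (g * x) := by
      unfold SemiconjBy
      rw [← hc]; group
    have heq : orderOf g = orderOf (g * x) := hsemi.orderOf_eq c
    have hmul : orderOf (g * x) = orderOf g * orderOf x :=
      hcomm.orderOf_mul_eq_mul_orderOf_of_coprime hco2
    have : orderOf g * orderOf x = orderOf g := by rw [← hmul, heq]
    have hx1 : orderOf x = 1 := (Nat.mul_eq_left (orderOf_pos g).ne').1 this
    exact orderOf_eq_one_iff.1 hx1
  · -- strip a prime q dividing both orderOf g and |M|
    obtain ⟨q, hq, hqd⟩ := Nat.exists_prime_and_dvd hco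
    have hqg : q ∣ orderOf g := hqd.trans (Nat.gcd_dvd_left _ _)
    have hqM : q ∣ Nat.card M := hqd.trans (Nat.gcd_dvd_right _ _)
    set t := orderOf g with ht
    have ht0 : t ≠ 0 := (orderOf_pos g).ne'
    set v := t.factorization q with hv
    have hqv_dvd : q ^ v ∣ t := Nat.ordProj_dvd t q
    have hqv1 : 1 < q ^ v := by
      have hv1 : 0 < v := (Nat.Prime.factorization_pos_of_dvd hq ht0 hqg)
      calc 1 < q := hq.one_lt
      _ ≤ q ^ v := Nat.le_self_pow (Nat.pos_iff_ne_zero.1 hv1) q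
    have hord : orderOf (g ^ (q ^ v)) = t / q ^ v := by
      rw [orderOf_pow, Nat.gcd_eq_right hqv_dvd]
    have hlt : orderOf (g ^ (q ^ v)) < t := by
      rw [hord]; exact Nat.div_lt_self (Nat.pos_of_ne_zero ht0) hqv1
    have hgN : g ^ (q ^ v) ∉ N := by
      intro hmem
      have h1 : (((g ^ (q ^ v)) : G) : G ⧸ N) = 1 := (QuotientGroup.eq_one_iff _).2 hmem
      have h2 : ((g : G ⧸ N)) ^ (q ^ v) = 1 := h1
      have h3 : orderOf ((g : G ⧸ N)) ∣ q ^ v := orderOf_dvd_of_pow_eq_one h2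
      have h4 : orderOf ((g : G ⧸ N)) ≠ 1 := by
        intro h5
        exact hg ((QuotientGroup.eq_one_iff g).1 (orderOf_eq_one_iff.1 h5))
      obtain ⟨i, hi, hqi⟩ := (Nat.dvd_prime_pow hq).1 h3
      have hi0 : i ≠ 0 := by
        rintro rfl
        rw [pow_zero] at hqi
        exact h4 hqi
      have hqdvd : q ∣ orderOf ((g : G ⧸ N)) := by
        rw [hqi]; exact dvd_pow_self q hi0
      exact hcop q hq hqM (hqdvd.trans (orderOf_dvd_natCard _))
    exact ih _ hlt _ hgN (hcomm.pow_left _) rfl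

theorem camina_frobenius_triple_iff_restriction {G : Type*} [Group G] [Fintype G]
    (N M : Subgroup G) (hC : IsCaminaTriple N M) (H : Subgroup G)
    (hHN : ∀ g : G, ∃ h ∈ H, ∃ n ∈ N, g = h * n) (hHM : H ⊓ M = ⊥) :
    IsFrobeniusTriple N M ↔
      IsFrobeniusTriple (((H ⊓ N) ⊔ M).subgroupOf (H ⊔ M)) (M.subgroupOf (H ⊔ M)) := by

  obtain ⟨hNn, hMn, hNbot, hNtop, hMbot, hMtop, hMN, hcam⟩ := hC
  haveI := hNn
  haveI := hMn
  set K := H ⊔ M with hK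
  set L := (H ⊓ N) ⊔ M with hL
  have hMK : M ≤ K := le_sup_right
  have hLN : L ≤ N := sup_le inf_le_right hMN
  have hML : M ≤ L := le_sup_right
  have hLeq : L = K ⊓ N := by
    apply le_antisymm
    · exact le_inf (sup_le (inf_le_left.trans le_sup_left) le_sup_right) hLN
    · rintro g hg
      rw [Subgroup.mem_inf] at hg
      obtain ⟨hgK, hgN⟩ := hg
      have hg2 : g ∈ (H : Set G) * (M : Set G) := by
        rw [← Subgroup.mul_normal H M]; exact hgK
      obtain ⟨h, hh, m, hm, rfl⟩ := hg2
      have hhN : h ∈ N := by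
        have : (h * m) * m⁻¹ ∈ N := N.mul_mem hgN (N.inv_mem (hMN hm))
        simpa using this
      exact Subgroup.mul_mem _ (Subgroup.mem_sup_left (Subgroup.mem_inf.2 ⟨hh, hhN⟩))
        (Subgroup.mem_sup_right hm)
  have hHtop : H ⊔ N = ⊤ := by
    rw [eq_top_iff]
    intro g _
    obtain ⟨h, hh, n, hn, rfl⟩ := hHN g
    exact mul_mem (Subgroup.mem_sup_left hh) (Subgroup.mem_sup_right hn)
  obtain ⟨h₀, hh₀H, hh₀N⟩ : ∃ h ∈ H, h ∉ N := by
    by_contra hcon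
    push_neg at hcon
    exact hNtop (by rw [← hHtop, sup_eq_right.2 hcon])
  have hh₀K : h₀ ∈ K := Subgroup.mem_sup_left hh₀H
  obtain ⟨x₀, hx₀M, hx₀1⟩ : ∃ x ∈ M, x ≠ 1 := by
    rcases M.bot_or_exists_ne_one with h | h
    · exact absurd h hMbot
    · exact h
  have hLsub : L.subgroupOf K = N.subgroupOf K := by
    rw [hLeq, Subgroup.inf_subgroupOf_left]
  haveI : (N.subgroupOf K).Normal := hNn.subgroupOf K
  haveI : (M.subgroupOf K).Normal := hMn.subgroupOf K
  haveI : (L.subgroupOf K).Normal := by rw [hLsub]; infer_instance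
  constructor
  · rintro ⟨_, _, _, _, _, _, _, hF⟩
    refine ⟨inferInstance, inferInstance, ?_, ?_, ?_, ?_, ?_, ?_⟩
    · -- L' ≠ ⊥
      intro heq
      have hx : (⟨x₀, hMK hx₀M⟩ : K) ∈ L.subgroupOf K := by
        rw [Subgroup.mem_subgroupOf]; exact hML hx₀M
      rw [heq, Subgroup.mem_bot] at hx
      exact hx₀1 (congrArg Subtype.val hx)
    · -- L' ≠ ⊤
      intro heq
      have hx : (⟨h₀, hh₀K⟩ : K) ∈ L.subgroupOf K := heq ▸ Subgroup.mem_top _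
      rw [Subgroup.mem_subgroupOf] at hx
      exact hh₀N (hLN hx)
    · -- M' ≠ ⊥
      intro heq
      have hx : (⟨x₀, hMK hx₀M⟩ : K) ∈ M.subgroupOf K := by
        rw [Subgroup.mem_subgroupOf]; exact hx₀M
      rw [heq, Subgroup.mem_bot] at hx
      exact hx₀1 (congrArg Subtype.val hx)
    · -- M' ≠ ⊤
      intro heq
      have hx : (⟨h₀, hh₀K⟩ : K) ∈ M.subgroupOf K := heq ▸ Subgroup.mem_top _
      rw [Subgroup.mem_subgroupOf] at hx
      exact hh₀N (hMN hx)
    · -- M' ≤ L'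
      intro y hy
      rw [Subgroup.mem_subgroupOf] at hy ⊢
      exact hML hy
    · -- centralizer condition in K
      intro x' hx' hx'1 y hy
      rw [Subgroup.mem_subgroupOf] at hx'
      have hcomm : (x' : G) * (y : G) = (y : G) * (x' : G) := by
        have h1 := Subgroup.mem_centralizer_iff.1 hy x' (Set.mem_singleton x')
        exact congrArg Subtype.val h1
      have hx'ne : (x' : G) ≠ 1 := by
        intro h1
        exact hx'1 (by ext; exact h1)
      have hyN : (y : G) ∈ N :=
        hF (x' : G) hx' hx'ne (Subgroup.mem_centralizer_iff.2 (by
          intro h hmem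
          rw [Set.mem_singleton_iff] at hmem
          subst hmem
          exact hcomm))
      rw [Subgroup.mem_subgroupOf, hLeq, Subgroup.mem_inf]
      exact ⟨(y : K).2, hyN⟩
  · rintro ⟨_, _, _, _, _, _, _, hFK⟩
    refine ⟨hNn, hMn, hNbot, hNtop, hMbot, hMtop, hMN, ?_⟩
    have hKsupN : K ⊔ N = ⊤ := by
      rw [hK, sup_assoc, sup_eq_right.2 hMN, hHtop]
    have hrel : N.relIndex K = N.index := by
      rw [← Subgroup.relIndex_sup_right K N, hKsupN, Subgroup.relIndex_top_right]
    have hcop : ∀ p : ℕ, p.Prime → p ∣ Nat.card M → ¬ p ∣ Nat.card (G ⧸ N) := by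
      intro p hp hpM hpQ
      haveI : Fact p.Prime := ⟨hp⟩
      have hpK : p ∣ Nat.card (↥K ⧸ N.subgroupOf K) := by
        have h1 : Nat.card (↥K ⧸ N.subgroupOf K) = N.relIndex K := rfl
        have h2 : Nat.card (G ⧸ N) = N.index := rfl
        rw [h1, hrel, ← h2]
        exact hpQ
      obtain ⟨kbar, hkbar⟩ := exists_prime_orderOf_dvd_card' (G := ↥K ⧸ N.subgroupOf K) p hpK
      obtain ⟨k, hk⟩ := QuotientGroup.mk_surjective kbar
      have hko : orderOf ((k : ↥K ⧸ N.subgroupOf K)) = p := by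
        show orderOf (QuotientGroup.mk k) = p
        rw [hk, hkbar]
      obtain ⟨w, hwQ, a, hwo⟩ := exists_primePow_order_not_mem (N.subgroupOf K) p hp k hko
      -- p-group fixed-point argument
      have hpM' : p ∣ Nat.card ↥(M.subgroupOf K) := by
        rw [Nat.card_congr (Subgroup.subgroupOfEquivOfLe hMK).toEquiv]
        exact hpM
      set P := Subgroup.zpowers w with hP
      have hPp : IsPGroup p ↥P := IsPGroup.of_card (by rw [Nat.card_zpowers, hwo])
      letI : MulAction ↥P ↥(M.subgroupOf K) :=
        MulAction.compHom _ ((MulAut.conjNormal : ↥K →* MulAut ↥(M.subgroupOf K)).comp P.subtype)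
      have h1fix : (1 : ↥(M.subgroupOf K)) ∈ MulAction.fixedPoints ↥P ↥(M.subgroupOf K) := by
        intro σ
        show (MulAut.conjNormal ((P.subtype) σ) : MulAut ↥(M.subgroupOf K)) 1 = 1
        exact map_one _
      obtain ⟨b, hbfix, hb1⟩ :=
        hPp.exists_fixed_point_of_prime_dvd_card_of_fixed_point ↥(M.subgroupOf K) hpM' h1fix
      have hbw : (MulAut.conjNormal w : MulAut ↥(M.subgroupOf K)) b = b :=
        hbfix ⟨w, Subgroup.mem_zpowers w⟩
      have hbconj : w * (b : ↥K) * w⁻¹ = (b : ↥K) := by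
        have := congrArg Subtype.val hbw
        rwa [MulAut.conjNormal_apply] at this
      have hbcomm : (b : ↥K) * w = w * (b : ↥K) := by
        calc (b : ↥K) * w = (w * (b : ↥K) * w⁻¹) * w := by rw [hbconj]
        _ = w * (b : ↥K) := by group
      have hbne : (b : ↥K) ≠ 1 := by
        intro h1
        have hb2 : b = 1 := by
          apply Subtype.ext
          exact h1
        exact hb1 hb2.symm
      have hwL : w ∈ L.subgroupOf K :=
        hFK (b : ↥K) b.2 hbne (Subgroup.mem_centralizer_iff.2 (by
          intro h hmem
          rw [Set.mem_singleton_iff] at hmem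
          subst hmem
          exact hbcomm))
      rw [hLsub] at hwL
      exact hwQ hwL
    intro x hxM hx1 y hy
    by_contra hyN
    have hcomm : Commute y x := by
      have := Subgroup.mem_centralizer_iff.1 hy x (Set.mem_singleton x)
      exact this.symm
    exact hx1 (camina_commute_eq_one hcam hcop y hyN x hxM hcomm)
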